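/- Let U be a vector space, U₁ a subspace, f(x) = Σ_{n∈ℤ} f_n x^{-n-1} ∈ U((x^{-1})) (only finitely many positive powers of x occur) and g(x) = Σ_{n∈ℤ} g_n x^{-n-1} ∈ U₁[[x,x^{-1}]]. If there exist k ∈ ℕ and z ∈ ℂ^× with (x-z)^k f(x) = (x-z)^k g(x), then for every n ∈ ℤ, f_n lies in the linear span of {g_m | m ≤ n}. -/

import Mathlib

/-- STATEMENT 0 (Lemma 2.1 of the paper, `U((x⁻¹))` case).
`f(x) = Σ_{n∈ℤ} f_n x^{-n-1}` and `g(x) = Σ_{n∈ℤ} g_n x^{-n-1}` are doubly infinite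
formal series represented by their coefficient functions `f g : ℤ → U`.  The coefficients
of `g` lie in the subspace `U₁`, `f` is lower truncated (`f ∈ U((x⁻¹))`, i.e. `f n = 0` for
`n` sufficiently small), and `(x-z)^k f(x) = (x-z)^k g(x)`, stated coefficientwise using
the binomial expansion `(x-z)^k = Σ_i (-z)^i C(k,i) x^{k-i}` (the coefficient of
`x^{-n-1}` in `(x-z)^k f(x)` is `Σ_{i≤k} C(k,i) (-z)^i f_{n+k-i}`).
Then every `f n` lies in the span of `{g m | m ≤ n}`; in particular `f n ∈ U₁`. (`U((x⁻¹))` case.) -/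
theorem stmt1 (U : Type) [AddCommGroup U] [Module ℂ U] (U₁ : Submodule ℂ U)
    (f g : ℤ → U) (hg : ∀ n : ℤ, g n ∈ U₁)
    (hf : ∃ N : ℤ, ∀ n : ℤ, n ≤ N → f n = 0)
    (k : ℕ) (z : ℂ) (hz : z ≠ 0)
    (heq : ∀ n : ℤ,
      ∑ i ∈ Finset.range (k + 1), ((k.choose i : ℂ) * (-z) ^ i) • f (n + k - i) =
      ∑ i ∈ Finset.range (k + 1), ((k.choose i : ℂ) * (-z) ^ i) • g (n + k - i)) :
    ∀ n : ℤ,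
      f n ∈ Submodule.span ℂ {u : U | ∃ m : ℤ, m ≤ n ∧ u = g m} ∧ f n ∈ U₁ := by
  obtain ⟨N, hN⟩ := hf
  set S : ℤ → Submodule ℂ U := fun n => Submodule.span ℂ {u : U | ∃ m : ℤ, m ≤ n ∧ u = g m}
    with hS
  have hmono : ∀ a b : ℤ, a ≤ b → S a ≤ S b := by
    intro a b hab
    apply Submodule.span_mono
    rintro u ⟨m, hm, rfl⟩
    exact ⟨m, hm.trans hab, rfl⟩
  have hgS : ∀ m n : ℤ, m ≤ n → g m ∈ S n := fun m n h =>
    Submodule.subset_span ⟨m, h, rfl⟩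
  have key : ∀ n : ℤ, ∀ m ≤ n, f m ∈ S m := by
    intro n
    rcases le_or_gt n N with h | h
    · intro m hm; rw [hN m (hm.trans h)]; exact zero_mem _
    · refine Int.leInduction (motive := fun n _ => ∀ m ≤ n, f m ∈ S m) (fun m hm => ?_) ?_ n h.le
      · rw [hN m hm]; exact zero_mem _
      · intro p _ ih m hm
        have H := heq (m - k)
        simp only [sub_add_cancel] at H
        rw [Finset.sum_range_succ'] at H
        simp only [Nat.choose_zero_right, Nat.cast_one, pow_zero, mul_one, one_smul,
          Nat.cast_zero, sub_zero] at H
        have hfm := eq_sub_of_add_eq' H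
        rw [hfm]
        refine sub_mem (Submodule.sum_mem _ fun i _ => Submodule.smul_mem _ _ ?_)
          (Submodule.sum_mem _ fun i _ => Submodule.smul_mem _ _ ?_)
        · exact hgS _ _ (by push_cast; omega)
        · exact (hmono _ _ (by push_cast; omega)) (ih _ (by push_cast; omega))
  intro n
  have h1 : f n ∈ S n := key n n le_rfl
  refine ⟨h1, ?_⟩
  have hle : S n ≤ U₁ := by
    rw [hS, Submodule.span_le]
    rintro u ⟨m, _, rfl⟩
    exact hg m
  exact hle h1
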